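/- Fix c > 0 and δ > 0 with cδ ≤ 1/e, set a = cδ/2, let y be the solution of the delay initial value problem with initial function φ ∈ Φ, and define b_k = y((k+1)δ) for k ≥ 0. Let n ≥ 1. If b_k > 0 for k = 1,…,n, then y is positive, decreasing and convex on [kδ, (k+1)δ] for each k = 1,…,n, and moreover b_{k+1} ≥ (1−a)·b_k − a·b_{k−1} for k = 1,…,n. -/
import Mathlib


open MeasureTheory Set

set_option maxHeartbeats 1000000

lemma trapezoid {f : ℝ → ℝ} {A B : ℝ} (hAB : A < B)
    (hconv : ConvexOn ℝ (Set.Icc A B) f) (hcont : ContinuousOn f (Set.Icc A B)) :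
    ∫ t in A..B, f t ≤ (B - A) * (f A + f B) / 2 := by
  have hBA : (0:ℝ) < B - A := by linarith
  set g : ℝ → ℝ := fun t => f A + (f B - f A) / (B - A) * (t - A) with hg
  have hle : ∀ t ∈ Set.Icc A B, f t ≤ g t := by
    intro t ht
    obtain ⟨ht1, ht2⟩ := ht
    set s : ℝ := (t - A) / (B - A) with hs
    have hs0 : 0 ≤ s := div_nonneg (by linarith) hBA.le
    have hs1 : s ≤ 1 := by rw [div_le_one hBA]; linarith
    have key := hconv.2 (Set.left_mem_Icc.mpr hAB.le) (Set.right_mem_Icc.mpr hAB.le)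
      (by linarith : (0:ℝ) ≤ 1 - s) hs0 (by ring)
    have ht' : (1 - s) • A + s • B = t := by
      simp only [smul_eq_mul, hs]; field_simp; ring
    rw [ht'] at key
    calc f t ≤ (1 - s) * f A + s * f B := key
      _ = g t := by simp only [hg, hs]; field_simp; ring
  have hfi : IntervalIntegrable f volume A B :=
    (hcont.mono (by rw [Set.uIcc_of_le hAB.le])).intervalIntegrable
  have hgi : IntervalIntegrable g volume A B := by
    exact (by fun_prop : Continuous g).intervalIntegrable A B
  calc ∫ t in A..B, f t ≤ ∫ t in A..B, g t :=
        intervalIntegral.integral_mono_on hAB.le hfi hgi hle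
    _ = (B - A) * (f A + f B) / 2 := by
        simp only [hg]
        rw [intervalIntegral.integral_add ((continuous_const).intervalIntegrable A B) ((by fun_prop : Continuous (fun t:ℝ => (f B - f A) / (B - A) * (t - A))).intervalIntegrable A B),
          intervalIntegral.integral_const,
          intervalIntegral.integral_const_mul]
        have : (∫ t in A..B, (t - A)) = (B - A)^2 / 2 := by
          rw [show (∫ t in A..B, (t - A)) = ∫ t in A..B, (fun u : ℝ => u) (t - A) from rfl,
            intervalIntegral.integral_comp_sub_right (fun u : ℝ => u) A, integral_id]
          ring
        rw [this]; field_simp; ring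

/-- The class `Φ` of initial functions: continuous, strictly decreasing on `[0, δ]`,
with `φ(0) = 1` and `φ(δ) > 0`. -/
def MemPhi (δ : ℝ) (φ : ℝ → ℝ) : Prop :=
  ContinuousOn φ (Set.Icc 0 δ) ∧ StrictAntiOn φ (Set.Icc 0 δ) ∧ φ 0 = 1 ∧ 0 < φ δ

/-- `y` is a solution on `[0, ∞)` of the delay initial value problem
`y'(t) + c y(t - δ) = 0` for `t ≥ δ`, with `y = φ` on `[0, δ]`. -/
def IsSolDDE (c δ : ℝ) (φ y : ℝ → ℝ) : Prop :=
  ContinuousOn y (Set.Ici 0) ∧ (∀ t ∈ Set.Icc 0 δ, y t = φ t) ∧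
  ∀ t ∈ Set.Ici δ, HasDerivWithinAt y (-(c * y (t - δ))) (Set.Ici δ) t

/-- If `b_k = y((k+1)δ) > 0` for `k = 1, …, n`, then `y` is positive, decreasing and convex
on each `[kδ, (k+1)δ]`, `k = 1, …, n`, and `b_{k+1} ≥ (1-a) b_k - a b_{k-1}` for
`k = 1, …, n`, where `a = cδ/2`. -/
theorem stmt11 (c δ : ℝ) (hc : 0 < c) (hδ : 0 < δ) (hcδ : c * δ ≤ 1 / Real.exp 1)
    (a : ℝ) (ha : a = c * δ / 2)
    (φ y : ℝ → ℝ) (hφ : MemPhi δ φ) (hy : IsSolDDE c δ φ y)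
    (b : ℕ → ℝ) (hb : ∀ k : ℕ, b k = y ((k + 1) * δ))
    (n : ℕ) (hn : 1 ≤ n)
    (hbpos : ∀ k : ℕ, 1 ≤ k → k ≤ n → 0 < b k) :
    (∀ k : ℕ, 1 ≤ k → k ≤ n →
      (∀ t ∈ Set.Icc ((k : ℝ) * δ) ((k + 1) * δ), 0 < y t) ∧
      AntitoneOn y (Set.Icc ((k : ℝ) * δ) ((k + 1) * δ)) ∧
      ConvexOn ℝ (Set.Icc ((k : ℝ) * δ) ((k + 1) * δ)) y) ∧
    ∀ k : ℕ, 1 ≤ k → k ≤ n → (1 - a) * b k - a * b (k - 1) ≤ b (k + 1) := by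
  obtain ⟨hφc, hφanti, hφ0, hφδ⟩ := hφ
  obtain ⟨hyc, hyφ, hyd⟩ := hy
  -- derivative as HasDerivAt for t > δ
  have hder : ∀ t : ℝ, δ < t → HasDerivAt y (-(c * y (t - δ))) t := by
    intro t ht
    exact (hyd t ht.le).hasDerivAt (Ici_mem_nhds ht)
  have hyIcc : ∀ {A B : ℝ}, 0 ≤ A → ContinuousOn y (Set.Icc A B) :=
    fun {A B} h => hyc.mono (fun t ht => le_trans h ht.1)
  -- base interval facts
  have pos0 : ∀ t ∈ Set.Icc (0:ℝ) δ, 0 < y t := by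
    intro t ht
    rw [hyφ t ht]
    rcases eq_or_lt_of_le ht.2 with h | h
    · rw [h]; exact hφδ
    · exact lt_trans hφδ (hφanti ht (Set.right_mem_Icc.mpr hδ.le) h)
  have ant0 : AntitoneOn y (Set.Icc (0:ℝ) δ) := by
    intro s hs t ht hst
    rw [hyφ s hs, hyφ t ht]
    exact hφanti.antitoneOn hs ht hst
  -- main induction
  have QQ : ∀ k : ℕ, k ≤ n →
      (∀ t ∈ Set.Icc ((k:ℝ) * δ) (((k:ℝ) + 1) * δ), 0 < y t) ∧
      AntitoneOn y (Set.Icc ((k:ℝ) * δ) (((k:ℝ) + 1) * δ)) := by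
    intro k
    induction k with
    | zero =>
      intro _
      constructor
      · intro t ht; apply pos0; simpa using ht
      · intro s hs t ht hst
        exact ant0 (by simpa using hs) (by simpa using ht) hst
    | succ m ih =>
      intro hmn
      obtain ⟨hpos, hant⟩ := ih (le_trans (Nat.le_succ m) hmn)
      have hm0 : (0:ℝ) ≤ (m:ℝ) := Nat.cast_nonneg m
      set A : ℝ := ((m:ℝ) + 1) * δ with hA
      set B : ℝ := ((m:ℝ) + 2) * δ with hB
      have hAB : A < B := by rw [hA, hB]; nlinarith
      have hA0 : (0:ℝ) ≤ A := by rw [hA]; nlinarith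
      have hdiff : ∀ x ∈ interior (Set.Icc A B), HasDerivAt y (-(c * y (x - δ))) x := by
        intro x hx
        rw [interior_Icc] at hx
        exact hder x (by rw [hA] at hx; nlinarith [hx.1])
      have hderiv_nonpos : ∀ x ∈ interior (Set.Icc A B), deriv y x ≤ 0 := by
        intro x hx
        rw [(hdiff x hx).deriv]
        have hx' := hx
        rw [interior_Icc] at hx'
        have hmem : x - δ ∈ Set.Icc ((m:ℝ) * δ) (((m:ℝ) + 1) * δ) := by
          constructor
          · rw [hA] at hx'; nlinarith [hx'.1]
          · rw [hB] at hx'; nlinarith [hx'.2]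
        have := hpos _ hmem
        nlinarith
      have hant' : AntitoneOn y (Set.Icc A B) :=
        antitoneOn_of_deriv_nonpos (convex_Icc A B) (hyIcc hA0)
          (fun x hx => (hdiff x hx).differentiableAt.differentiableWithinAt) hderiv_nonpos
      have e1 : ((m + 1 : ℕ) : ℝ) * δ = A := by rw [hA]; push_cast; ring
      have e2 : (((m + 1 : ℕ) : ℝ) + 1) * δ = B := by rw [hB]; push_cast; ring
      have hbB : 0 < y B := by
        have h1 : 0 < b (m + 1) := hbpos (m + 1) (Nat.succ_le_succ (Nat.zero_le m)) hmn
        rw [hb (m + 1), e2] at h1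
        exact h1
      constructor
      · intro t ht
        rw [e1, e2] at ht
        have htB : y B ≤ y t := hant' ht (Set.right_mem_Icc.mpr hAB.le) ht.2
        linarith
      · intro s hs t ht hst
        rw [e1, e2] at hs ht
        exact hant' hs ht hst
  -- convexity
  have conv' : ∀ m : ℕ, m + 1 ≤ n →
      ConvexOn ℝ (Set.Icc (((m:ℝ) + 1) * δ) (((m:ℝ) + 2) * δ)) y := by
    intro m hmn
    obtain ⟨_, hant⟩ := QQ m (le_trans (Nat.le_succ m) hmn)
    have hm0 : (0:ℝ) ≤ (m:ℝ) := Nat.cast_nonneg m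
    set A : ℝ := ((m:ℝ) + 1) * δ with hA
    set B : ℝ := ((m:ℝ) + 2) * δ with hB
    have hA0 : (0:ℝ) ≤ A := by rw [hA]; nlinarith
    have hdiff : ∀ x ∈ interior (Set.Icc A B), HasDerivAt y (-(c * y (x - δ))) x := by
      intro x hx
      rw [interior_Icc] at hx
      exact hder x (by rw [hA] at hx; nlinarith [hx.1])
    apply MonotoneOn.convexOn_of_deriv (convex_Icc A B) (hyIcc hA0)
      (fun x hx => (hdiff x hx).differentiableAt.differentiableWithinAt)
    intro x1 hx1 x2 hx2 h12
    rw [(hdiff x1 hx1).deriv, (hdiff x2 hx2).deriv]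
    rw [interior_Icc] at hx1 hx2
    have hm1 : x1 - δ ∈ Set.Icc ((m:ℝ) * δ) (((m:ℝ) + 1) * δ) := by
      constructor
      · rw [hA] at hx1; nlinarith [hx1.1]
      · rw [hB] at hx1; nlinarith [hx1.2]
    have hm2 : x2 - δ ∈ Set.Icc ((m:ℝ) * δ) (((m:ℝ) + 1) * δ) := by
      constructor
      · rw [hA] at hx2; nlinarith [hx2.1]
      · rw [hB] at hx2; nlinarith [hx2.2]
    have := hant hm1 hm2 (by linarith)
    nlinarith
  constructor
  · intro k hk1 hkn
    obtain ⟨m, rfl⟩ : ∃ m, k = m + 1 := ⟨k - 1, by omega⟩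
    obtain ⟨hpos, hant⟩ := QQ (m + 1) hkn
    refine ⟨?_, ?_, ?_⟩
    · intro t ht; apply hpos; push_cast at ht ⊢; exact ht
    · intro s hs t ht hst; apply hant <;> push_cast at hs ht ⊢
      · exact hs
      · exact ht
      · exact hst
    · have := conv' m hkn
      have heq : Set.Icc (((m + 1 : ℕ):ℝ) * δ) ((((m + 1 : ℕ):ℝ) + 1) * δ)
          = Set.Icc (((m:ℝ) + 1) * δ) (((m:ℝ) + 2) * δ) := by push_cast; ring_nf
      rw [heq]
      exact this
  · intro k hk1 hkn
    obtain ⟨m, rfl⟩ : ∃ m, k = m + 1 := ⟨k - 1, by omega⟩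
    have hm0 : (0:ℝ) ≤ (m:ℝ) := Nat.cast_nonneg m
    set A : ℝ := ((m:ℝ) + 1) * δ with hA
    set B : ℝ := ((m:ℝ) + 2) * δ with hB
    set C : ℝ := ((m:ℝ) + 3) * δ with hC
    have hAB : A < B := by rw [hA, hB]; nlinarith
    have hBC : B < C := by rw [hB, hC]; nlinarith
    -- FTC on [B, C]
    have hder' : ∀ t ∈ Set.uIcc B C, HasDerivAt y (-(c * y (t - δ))) t := by
      intro t ht
      rw [Set.uIcc_of_le hBC.le] at ht
      exact hder t (by rw [hB] at ht; nlinarith [ht.1])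
    have hmaps : Set.MapsTo (fun t => t - δ) (Set.Icc B C) (Set.Ici 0) := by
      intro t ht
      have h1 := ht.1
      rw [hB] at h1
      have h2 : (0:ℝ) ≤ (m:ℝ) * δ := mul_nonneg hm0 hδ.le
      simp only [Set.mem_Ici]
      linarith
    have hcontd : ContinuousOn (fun t => -(c * y (t - δ))) (Set.Icc B C) := by
      apply ContinuousOn.neg
      apply ContinuousOn.mul continuousOn_const
      exact hyc.comp ((continuous_id.sub continuous_const).continuousOn) hmaps
    have hint : IntervalIntegrable (fun t => -(c * y (t - δ))) volume B C :=
      (hcontd.mono (by rw [Set.uIcc_of_le hBC.le])).intervalIntegrable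
    have hFTC : (∫ t in B..C, -(c * y (t - δ))) = y C - y B :=
      intervalIntegral.integral_eq_sub_of_hasDerivAt hder' hint
    have hshift : (∫ t in B..C, y (t - δ)) = ∫ s in A..B, y s := by
      rw [intervalIntegral.integral_comp_sub_right y δ]
      congr 1
      · rw [hA, hB]; ring
      · rw [hB, hC]; ring
    have hre : y C - y B = -(c * ∫ s in A..B, y s) := by
      rw [← hFTC, intervalIntegral.integral_neg, intervalIntegral.integral_const_mul, hshift]
    -- trapezoid estimate
    have hconvAB : ConvexOn ℝ (Set.Icc A B) y := conv' m hkn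
    have hA0' : (0:ℝ) ≤ A := by rw [hA]; positivity
    have hcontAB : ContinuousOn y (Set.Icc A B) := hyIcc hA0'
    have htrap : (∫ s in A..B, y s) ≤ (B - A) * (y A + y B) / 2 :=
      trapezoid hAB hconvAB hcontAB
    have hBA : B - A = δ := by rw [hA, hB]; ring
    -- identify b values
    have hbm : b m = y A := by rw [hb m, hA]
    have hbm1 : b (m + 1) = y B := by rw [hb (m + 1), hB]; push_cast; ring_nf
    have hbm2 : b (m + 1 + 1) = y C := by rw [hb (m + 2), hC]; push_cast; ring_nf
    have hsub : m + 1 - 1 = m := rfl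
    rw [hsub, hbm, hbm1, hbm2]
    have hmul : c * (∫ s in A..B, y s) ≤ c * ((B - A) * (y A + y B) / 2) :=
      mul_le_mul_of_nonneg_left htrap hc.le
    rw [hBA] at hmul
    rw [ha]
    linarith [hmul, hre]
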